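/- Let (T,L) be a TAP instance where T is a k-wide tree with root r, and let L' ⊆ L be a shadow-minimal set of links. Then for every principal subtree T_i of T, the number of cross-links in L' that have an endpoint inside T_i (i.e., an endpoint in T_i different from r) is at most k. -/

import Mathlib

open scoped Classical

/-- `a` lies on the unique path in the tree `G` between the endpoints of the link `ℓ`. -/
def MemLinkPath {V : Type} (G : SimpleGraph V) (ℓ : Sym2 V) (a : V) : Prop :=
  ∃ u v : V, ℓ = s(u, v) ∧ G.dist u a + G.dist a v = G.dist u v

/-- The edge set `P_ℓ` of the unique path in the tree `G` between the endpoints of `ℓ`. -/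
def linkPath {V : Type} (G : SimpleGraph V) (ℓ : Sym2 V) : Set (Sym2 V) :=
  {e | e ∈ G.edgeSet ∧ ∀ a ∈ e, MemLinkPath G ℓ a}

/-- `s` is a shadow of the link `ℓ`: both endpoints of `s` lie on the path `P_ℓ`. -/
def IsShadow {V : Type} (G : SimpleGraph V) (s ℓ : Sym2 V) : Prop :=
  ∀ a ∈ s, MemLinkPath G ℓ a

/-- Links `ℓ₁`, `ℓ₂` are shadow-minimal: no (proper) shadow `s` of one of them, say `ℓ₁`,
satisfies `P_{ℓ₁} ∪ P_{ℓ₂} = P_s ∪ P_{ℓ₂}`. -/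
def ShadowMinimalPair {V : Type} (G : SimpleGraph V) (ℓ₁ ℓ₂ : Sym2 V) : Prop :=
  ¬ ∃ s : Sym2 V, s ≠ ℓ₁ ∧ IsShadow G s ℓ₁ ∧
      linkPath G s ∪ linkPath G ℓ₂ = linkPath G ℓ₁ ∪ linkPath G ℓ₂

/-- A set of links is shadow-minimal if its links are pairwise shadow-minimal. -/
def ShadowMinimalSet {V : Type} (G : SimpleGraph V) (L' : Finset (Sym2 V)) : Prop :=
  ∀ ℓ₁ ∈ L', ∀ ℓ₂ ∈ L', ℓ₁ ≠ ℓ₂ → ShadowMinimalPair G ℓ₁ ℓ₂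

/-- `v` belongs to the principal subtree of the tree `G` rooted at `r` associated with the
child `c` of `r` (i.e. `v = r`, or `c` lies on the path from `r` to `v`). -/
def MemPrincipal {V : Type} (G : SimpleGraph V) (r c v : V) : Prop :=
  v = r ∨ G.dist r c + G.dist c v = G.dist r v

/-- Vertex set of the principal subtree of child `c`. -/
noncomputable def principalVerts {V : Type} [Fintype V] (G : SimpleGraph V) (r c : V) :
    Finset V :=
  Finset.univ.filter (fun v => MemPrincipal G r c v)

/-- The leaves (degree-1 vertices) of the principal subtree of child `c`. -/
noncomputable def principalLeaves {V : Type} [Fintype V] (G : SimpleGraph V) (r c : V) :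
    Finset V :=
  (principalVerts G r c).filter
    (fun v => ((principalVerts G r c).filter (fun w => G.Adj v w)).card = 1)

/-- The tree `G` is `k`-wide with root `r`: every principal subtree has at most `k`
leaves. -/
def KWide {V : Type} [Fintype V] (G : SimpleGraph V) (r : V) (k : ℕ) : Prop :=
  ∀ c : V, G.Adj r c → (principalLeaves G r c).card ≤ k

/-- `u` and `v` lie in a common principal subtree of the tree `G` rooted at `r`. -/
def SameSubtree {V : Type} (G : SimpleGraph V) (r u v : V) : Prop :=
  ∃ c : V, G.Adj r c ∧ MemPrincipal G r c u ∧ MemPrincipal G r c v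

/-- `ℓ` is a cross-link with respect to the root `r`: both endpoints differ from `r` and
lie in different principal subtrees. -/
def IsCrossLink {V : Type} (G : SimpleGraph V) (r : V) (ℓ : Sym2 V) : Prop :=
  ∃ u v : V, ℓ = s(u, v) ∧ u ≠ r ∧ v ≠ r ∧ ¬ SameSubtree G r u v

namespace TapAux


open SimpleGraph

variable {V : Type} {G : SimpleGraph V}

/-- `x` lies on the geodesic between `a` and `b`. -/
def Btw (G : SimpleGraph V) (a x b : V) : Prop :=
  G.dist a x + G.dist x b = G.dist a b

lemma btw_self_left (a b : V) : Btw G a a b := by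
  simp [Btw]

lemma btw_self_right (a b : V) : Btw G a b b := by
  simp [Btw]

lemma Btw.symm {a x b : V} (h : Btw G a x b) : Btw G b x a := by
  unfold Btw at h ⊢
  rw [SimpleGraph.dist_comm (u := b) (v := x), SimpleGraph.dist_comm (u := x) (v := a),
    SimpleGraph.dist_comm (u := b) (v := a)]
  omega

lemma btw_trans (hc : G.Connected) {a x y z : V} (h1 : Btw G a x y) (h2 : Btw G a y z) :
    Btw G a x z ∧ Btw G x y z := by
  unfold Btw at *
  have t1 := hc.dist_triangle (u := a) (v := x) (w := z)
  have t2 := hc.dist_triangle (u := x) (v := y) (w := z)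
  omega

lemma path_length (hT : G.IsTree) {a b : V} {p : G.Walk a b} (hp : p.IsPath) :
    p.length = G.dist a b := by
  obtain ⟨q, hq, hql⟩ := hT.isConnected.exists_path_of_dist a b
  rw [(hT.existsUnique_path a b).unique hp hq, hql]

lemma path_eq (hT : G.IsTree) {a b : V} {p q : G.Walk a b} (hp : p.IsPath) (hq : q.IsPath) :
    p = q := (hT.existsUnique_path a b).unique hp hq

lemma mem_support_iff_btw (hT : G.IsTree) {a b x : V} {p : G.Walk a b} (hp : p.IsPath) :
    x ∈ p.support ↔ Btw G a x b := by
  constructor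
  · intro hx
    have h1 : (p.takeUntil x hx).length = G.dist a x := path_length hT (hp.takeUntil hx)
    have h2 : (p.dropUntil x hx).length = G.dist x b := path_length hT (hp.dropUntil hx)
    have h4 : (p.takeUntil x hx).length + (p.dropUntil x hx).length = p.length := by
      rw [← SimpleGraph.Walk.length_append, p.take_spec hx]
    have h5 := path_length hT hp
    unfold Btw
    omega
  · intro hbtw
    obtain ⟨q1, hq1, hl1⟩ := hT.isConnected.exists_path_of_dist a x
    obtain ⟨q2, hq2, hl2⟩ := hT.isConnected.exists_path_of_dist x b
    have hW : (q1.append q2).length = G.dist a b := by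
      rw [SimpleGraph.Walk.length_append, hl1, hl2, hbtw]
    have hWp := SimpleGraph.Walk.isPath_of_length_eq_dist _ hW
    rw [← path_eq hT hWp hp]
    simp [SimpleGraph.Walk.mem_support_append_iff]

lemma btw_total (hT : G.IsTree) {a b x y : V} (hx : Btw G a x b) (hy : Btw G a y b) :
    Btw G a x y ∨ Btw G a y x := by
  obtain ⟨p, hp, _⟩ := hT.isConnected.exists_path_of_dist a b
  have hx' := (mem_support_iff_btw hT hp).mpr hx
  have hy' := (mem_support_iff_btw hT hp).mpr hy
  rw [← p.take_spec hy', SimpleGraph.Walk.mem_support_append_iff] at hx'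
  rcases hx' with h | h
  · exact Or.inl ((mem_support_iff_btw hT (hp.takeUntil hy')).mp h)
  · right
    have hyxb := (mem_support_iff_btw hT (hp.dropUntil hy')).mp h
    unfold Btw at *
    omega

lemma adj_dist (hT : G.IsTree) {r w z : V} (h : G.Adj w z) :
    G.dist r z + 1 = G.dist r w ∨ G.dist r w + 1 = G.dist r z := by
  obtain ⟨p, hp, hl⟩ := hT.isConnected.exists_path_of_dist r w
  by_cases hz : z ∈ p.support
  · left
    have hb := (mem_support_iff_btw hT hp).mp hz
    have h1 : G.dist z w = 1 := SimpleGraph.dist_eq_one_iff_adj.mpr h.symm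
    unfold Btw at hb
    omega
  · right
    have hW : (SimpleGraph.Walk.cons h.symm p.reverse).IsPath := by
      rw [SimpleGraph.Walk.cons_isPath_iff]
      refine ⟨hp.reverse, ?_⟩
      rw [SimpleGraph.Walk.support_reverse, List.mem_reverse]
      exact hz
    have := path_length hT hW
    rw [SimpleGraph.Walk.length_cons, SimpleGraph.Walk.length_reverse, hl] at this
    rw [SimpleGraph.dist_comm (u := r) (v := z)]
    omega

lemma exists_first_step (hT : G.IsTree) {r v : V} (hv : v ≠ r) :
    ∃ z, G.Adj r z ∧ G.dist z v + 1 = G.dist r v ∧ Btw G r z v := by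
  obtain ⟨p, hp, hl⟩ := hT.isConnected.exists_path_of_dist r v
  cases p with
  | nil => exact absurd rfl hv.symm
  | @cons _ z _ h q =>
    rw [SimpleGraph.Walk.cons_isPath_iff] at hp
    have hq : q.length = G.dist z v := path_length hT hp.1
    rw [SimpleGraph.Walk.length_cons, hq] at hl
    have hz : G.dist r z = 1 := SimpleGraph.dist_eq_one_iff_adj.mpr h
    exact ⟨z, h, hl, by unfold Btw; omega⟩


variable [Fintype V]

lemma btw_of_memPrincipal (hc : G.Connected) {r c v : V} (h : MemPrincipal G r c v)
    (hv : v ≠ r) : Btw G r c v := h.resolve_left hv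

lemma step_in_subtree (hT : G.IsTree) {r c y y' : V} (hc : G.Adj r c) (hy : Btw G r c y)
    (hyr : y ≠ r) (hadj : G.Adj y y') (hy'r : y' ≠ r) : Btw G r c y' := by
  have hconn := hT.isConnected
  have h1 : G.dist y y' = 1 := SimpleGraph.dist_eq_one_iff_adj.mpr hadj
  have h1' : G.dist y' y = 1 := by rw [SimpleGraph.dist_comm]; exact h1
  have hdc : G.dist r c = 1 := SimpleGraph.dist_eq_one_iff_adj.mpr hc
  rcases adj_dist hT (r := r) hadj with hdown | hup
  · have hby' : Btw G r y' y := by unfold Btw; omega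
    rcases btw_total hT hy hby' with h | h
    · exact h
    · unfold Btw at h
      by_cases h0 : G.dist r y' = 0
      · exact absurd (hconn.dist_eq_zero_iff.mp h0).symm hy'r
      · have h3 : y' = c := hconn.dist_eq_zero_iff.mp (by omega)
        subst h3
        exact btw_self_right r y'
  · have hby' : Btw G r y y' := by unfold Btw; omega
    exact (btw_trans hconn hy hby').1

lemma walk_subtree (hT : G.IsTree) {r c : V} (hc : G.Adj r c) :
    ∀ {y x : V} (W : G.Walk y x), r ∉ W.support → Btw G r c y → y ≠ r →
      Btw G r c x ∧ x ≠ r := by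
  intro y x W
  induction W with
  | nil => exact fun _ hy hyr => ⟨hy, hyr⟩
  | @cons a b d h q ih =>
    intro hr hy hyr
    rw [SimpleGraph.Walk.support_cons] at hr
    have hrq : r ∉ q.support := fun hm => hr (List.mem_cons_of_mem _ hm)
    have hbr : b ≠ r := fun hbr => hrq (hbr ▸ q.start_mem_support)
    exact ih hrq (step_in_subtree hT hc hy hyr h hbr) hbr

lemma cross_through_root (hT : G.IsTree) {r u x : V} (hu : u ≠ r) (hx : x ≠ r)
    (hns : ¬ SameSubtree G r u x) : Btw G u r x := by
  obtain ⟨z, hz, _, hbz⟩ := exists_first_step hT hu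
  obtain ⟨p, hp, hl⟩ := hT.isConnected.exists_path_of_dist u x
  by_cases hr : r ∈ p.support
  · exact (mem_support_iff_btw hT hp).mp hr
  · exfalso
    obtain ⟨hbx, hxr⟩ := walk_subtree hT hz p hr hbz hu
    exact hns ⟨z, hz, Or.inr hbz, Or.inr hbx⟩

lemma exists_leaf_above (hT : G.IsTree) {r c u : V} (hc : G.Adj r c)
    (hu : Btw G r c u) (hur : u ≠ r) :
    ∃ w, w ∈ principalLeaves G r c ∧ Btw G r u w := by
  classical
  have hconn := hT.isConnected
  have hdc : G.dist r c = 1 := SimpleGraph.dist_eq_one_iff_adj.mpr hc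
  set S : Finset V := Finset.univ.filter (fun w => Btw G r u w) with hS
  have hne : S.Nonempty := ⟨u, by simp [hS, btw_self_right]⟩
  obtain ⟨w, hwS, hmax⟩ := S.exists_max_image (fun w => G.dist r w) hne
  have hmax' : ∀ y, Btw G r u y → G.dist r y ≤ G.dist r w := by
    intro y hy
    exact hmax y (by simp [hS, hy])
  rw [hS, Finset.mem_filter] at hwS
  have hwS : Btw G r u w := hwS.2
  have hdu : G.dist r u ≠ 0 := fun h0 => hur (hconn.dist_eq_zero_iff.mp h0).symm
  have hdw : G.dist r w ≠ 0 := by unfold Btw at hwS; omega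
  have hwr : w ≠ r := fun h => hdw (by rw [h]; exact SimpleGraph.dist_self)
  have hbcw : Btw G r c w := (btw_trans hconn hu hwS).1
  -- the neighbour of `w` towards `r`
  obtain ⟨z, hzw, hzd, hbz⟩ := exists_first_step hT (r := w) (v := r) (fun h => hwr h.symm)
  have hbzw : Btw G r z w := hbz.symm
  have hz1 : G.dist r z + 1 = G.dist r w := by
    rw [SimpleGraph.dist_comm (u := r) (v := z), SimpleGraph.dist_comm (u := r) (v := w)]
    exact hzd
  have hzP : MemPrincipal G r c z := by
    rcases btw_total hT hbcw hbzw with h | h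
    · exact Or.inr h
    · unfold Btw at h
      by_cases h0 : G.dist r z = 0
      · exact Or.inl (hconn.dist_eq_zero_iff.mp h0).symm
      · have h2 : z = c := hconn.dist_eq_zero_iff.mp (by omega)
        subst h2
        exact Or.inr (btw_self_right r z)
  have hfilter : (principalVerts G r c).filter (fun y => G.Adj w y) = {z} := by
    ext y
    simp only [Finset.mem_filter, Finset.mem_singleton, principalVerts, Finset.mem_univ,
      true_and]
    constructor
    · rintro ⟨hyP, hadj⟩
      have hdy : G.dist w y = 1 := SimpleGraph.dist_eq_one_iff_adj.mpr hadj
      have hdy' : G.dist y w = 1 := by rw [SimpleGraph.dist_comm]; exact hdy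
      rcases adj_dist hT (r := r) hadj with hdown | hup
      · have hbyw : Btw G r y w := by unfold Btw; omega
        rcases btw_total hT hbyw hbzw with h | h
        · have h0 : G.dist y z = 0 := by unfold Btw at h; omega
          exact hconn.dist_eq_zero_iff.mp h0
        · have h0 : G.dist z y = 0 := by unfold Btw at h; omega
          exact (hconn.dist_eq_zero_iff.mp h0).symm
      · exfalso
        have hbwy : Btw G r w y := by unfold Btw; omega
        have hby : Btw G r u y := (btw_trans hconn hwS hbwy).1
        have := hmax' y hby
        omega
    · rintro rfl
      exact ⟨hzP, hzw⟩
  refine ⟨w, ?_, hwS⟩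
  unfold principalLeaves
  rw [Finset.mem_filter, hfilter]
  refine ⟨?_, rfl⟩
  unfold principalVerts
  simp only [Finset.mem_filter, Finset.mem_univ, true_and]
  exact Or.inr hbcw

lemma memLinkPath_iff {u v a : V} : MemLinkPath G s(u, v) a ↔ Btw G u a v := by
  constructor
  · rintro ⟨u', v', heq, hb⟩
    rw [Sym2.eq_iff] at heq
    rcases heq with ⟨h1, h2⟩ | ⟨h1, h2⟩
    · subst h1; subst h2; exact hb
    · subst h1; subst h2; exact Btw.symm hb
  · intro h
    exact ⟨u, v, rfl, h⟩

lemma mem_linkPath_iff {u v : V} {e : Sym2 V} :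
    e ∈ linkPath G s(u, v) ↔ e ∈ G.edgeSet ∧ ∀ a ∈ e, Btw G u a v := by
  unfold linkPath
  simp only [Set.mem_setOf_eq, memLinkPath_iff]

lemma shadow_exists (hT : G.IsTree) {r u₁ x₁ u₂ x₂ : V}
    (h12 : Btw G r u₁ u₂)
    (hu₁ : u₁ ≠ r) (hx₁ : x₁ ≠ r) (hns₁ : ¬ SameSubtree G r u₁ x₁)
    (hu₂ : u₂ ≠ r) (hx₂ : x₂ ≠ r) (hns₂ : ¬ SameSubtree G r u₂ x₂) :
    ¬ ShadowMinimalPair G s(u₁, x₁) s(u₂, x₂) := by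
  intro hsm
  have hconn := hT.isConnected
  have hbr1 : Btw G u₁ r x₁ := cross_through_root hT hu₁ hx₁ hns₁
  have hbr2 : Btw G u₂ r x₂ := cross_through_root hT hu₂ hx₂ hns₂
  have hi : ∀ a, Btw G r a x₁ → Btw G u₁ a x₁ := fun a h =>
    ((btw_trans hconn h.symm hbr1.symm).1).symm
  have hii : ∀ a, Btw G u₁ a r → Btw G u₂ a x₂ := by
    intro a h
    have h1 : Btw G r a u₂ := (btw_trans hconn h.symm h12).1
    exact (btw_trans hconn h1.symm hbr2).1
  have hiii : ∀ a, Btw G u₁ a x₁ → Btw G u₁ a r ∨ Btw G r a x₁ := by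
    intro a h
    rcases btw_total hT h hbr1 with h' | h'
    · exact Or.inl h'
    · right
      unfold Btw at h h' hbr1 ⊢
      omega
  apply hsm
  refine ⟨s(r, x₁), ?_, ?_, ?_⟩
  · intro h
    rw [Sym2.eq_iff] at h
    rcases h with ⟨h1, _⟩ | ⟨h1, _⟩
    · exact hu₁ h1.symm
    · exact hx₁ h1.symm
  · intro a ha
    rcases Sym2.mem_iff.mp ha with rfl | rfl
    · exact memLinkPath_iff.mpr hbr1
    · exact memLinkPath_iff.mpr (btw_self_right u₁ a)
  · ext e
    induction e using Sym2.ind with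
    | _ a b =>
      simp only [Set.mem_union]
      constructor
      · rintro (hs | h2)
        · obtain ⟨hE, hall⟩ := mem_linkPath_iff.mp hs
          exact Or.inl (mem_linkPath_iff.mpr ⟨hE, fun m hm => hi m (hall m hm)⟩)
        · exact Or.inr h2
      · rintro (h1 | h2)
        · obtain ⟨hE, hall⟩ := mem_linkPath_iff.mp h1
          have ha : Btw G u₁ a x₁ := hall a (Sym2.mem_mk_left a b)
          have hb : Btw G u₁ b x₁ := hall b (Sym2.mem_mk_right a b)
          have hadj : G.Adj a b := hE
          have hdab : G.dist a b = 1 := SimpleGraph.dist_eq_one_iff_adj.mpr hadj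
          have hdba : G.dist b a = 1 := by rw [SimpleGraph.dist_comm]; exact hdab
          have memS : Btw G r a x₁ → Btw G r b x₁ → (s(a, b) : Sym2 V) ∈ linkPath G s(r, x₁) := by
            intro h1 h2
            refine mem_linkPath_iff.mpr ⟨hE, fun m hm => ?_⟩
            rcases Sym2.mem_iff.mp hm with rfl | rfl
            · exact h1
            · exact h2
          have mem2 : Btw G u₁ a r → Btw G u₁ b r → (s(a, b) : Sym2 V) ∈ linkPath G s(u₂, x₂) := by
            intro h1 h2
            refine mem_linkPath_iff.mpr ⟨hE, fun m hm => ?_⟩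
            rcases Sym2.mem_iff.mp hm with rfl | rfl
            · exact hii m h1
            · exact hii m h2
          rcases hiii a ha with haL | haR <;> rcases hiii b hb with hbL | hbR
          · exact Or.inr (mem2 haL hbL)
          · by_cases hA : Btw G r a x₁
            · exact Or.inl (memS hA hbR)
            · by_cases hB : Btw G u₁ b r
              · exact Or.inr (mem2 haL hB)
              · exfalso
                have har : a ≠ r := fun h => hA (by rw [h]; exact btw_self_left r x₁)
                have hbrr : b ≠ r := fun h => hB (by rw [h]; exact btw_self_right u₁ r)
                have hdar : G.dist a r ≠ 0 :=
                  fun h0 => har (hconn.dist_eq_zero_iff.mp h0)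
                have hdrb : G.dist r b ≠ 0 :=
                  fun h0 => hbrr (hconn.dist_eq_zero_iff.mp h0).symm
                have ht := hconn.dist_triangle (u := u₁) (v := a) (w := b)
                unfold Btw at haL hbR hb hbr1
                omega
          · by_cases hB : Btw G r b x₁
            · exact Or.inl (memS haR hB)
            · by_cases hA : Btw G u₁ a r
              · exact Or.inr (mem2 hA hbL)
              · exfalso
                have hbrr : b ≠ r := fun h => hB (by rw [h]; exact btw_self_left r x₁)
                have har : a ≠ r := fun h => hA (by rw [h]; exact btw_self_right u₁ r)
                have hdbr : G.dist b r ≠ 0 :=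
                  fun h0 => hbrr (hconn.dist_eq_zero_iff.mp h0)
                have hdra : G.dist r a ≠ 0 :=
                  fun h0 => har (hconn.dist_eq_zero_iff.mp h0).symm
                have ht := hconn.dist_triangle (u := u₁) (v := b) (w := a)
                unfold Btw at hbL haR ha hbr1
                omega
          · exact Or.inl (memS haR hbR)
        · exact Or.inr h2

end TapAux


/-- If `T` is a `k`-wide tree with root `r` and `L' ⊆ L` is shadow-minimal,
then for every principal subtree (indexed by a child `c` of `r`), at most `k` cross-links
of `L'` have an endpoint inside that subtree (different from `r`). -/
theorem stmt_11 {V : Type} [Fintype V] [DecidableEq V]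
    (G : SimpleGraph V) (hT : G.IsTree)
    (r : V) (k : ℕ) (hWide : KWide G r k)
    (L L' : Finset (Sym2 V)) (hLlinks : ∀ ℓ ∈ L, ¬ ℓ.IsDiag)
    (hL' : L' ⊆ L) (hMin : ShadowMinimalSet G L')
    (c : V) (hc : G.Adj r c) :
    (L'.filter (fun ℓ => IsCrossLink G r ℓ ∧
        ∃ v ∈ ℓ, v ≠ r ∧ MemPrincipal G r c v)).card ≤ k := by
  classical
  have hconn := hT.isConnected
  set F := L'.filter (fun ℓ => IsCrossLink G r ℓ ∧
      ∃ v ∈ ℓ, v ≠ r ∧ MemPrincipal G r c v) with hF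
  have key : ∀ ℓ ∈ F, ∃ w, w ∈ principalLeaves G r c ∧ ∃ u x : V, ℓ = s(u, x) ∧ u ≠ r ∧
      x ≠ r ∧ ¬ SameSubtree G r u x ∧ TapAux.Btw G r u w := by
    intro ℓ hℓ
    rw [hF, Finset.mem_filter] at hℓ
    obtain ⟨hmem, hcross, m, hmm, hmr, hmP⟩ := hℓ
    obtain ⟨u, v, heq, hur, hvr, hns⟩ := hcross
    have hbm : TapAux.Btw G r c m := hmP.resolve_left hmr
    obtain ⟨w, hw, hbw⟩ := TapAux.exists_leaf_above hT hc hbm hmr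
    have hmuv : m = u ∨ m = v := by
      rw [heq] at hmm
      exact Sym2.mem_iff.mp hmm
    rcases hmuv with rfl | rfl
    · exact ⟨w, hw, m, v, heq, hur, hvr, hns, hbw⟩
    · refine ⟨w, hw, m, u, ?_, hvr, hur, ?_, hbw⟩
      · rw [heq, Sym2.eq_swap]
      · rintro ⟨c', h1, h2, h3⟩
        exact hns ⟨c', h1, h3, h2⟩
  choose wfun hwfun using key
  have hle : F.card ≤ (principalLeaves G r c).card := by
    apply Finset.card_le_card_of_injOn (fun ℓ => if h : ℓ ∈ F then wfun ℓ h else r)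
    · intro ℓ hℓ
      simp only [dif_pos hℓ]
      exact Finset.mem_coe.mpr (by rw [dif_pos (show ℓ ∈ F from hℓ)]; exact (hwfun ℓ _).1)
    · intro ℓ₁ h1 ℓ₂ h2 hfeq
      by_contra hne
      have h1' : ℓ₁ ∈ F := h1
      have h2' : ℓ₂ ∈ F := h2
      simp only [dif_pos h1', dif_pos h2'] at hfeq
      obtain ⟨hw1leaf, u₁, x₁, heq₁, hu₁, hx₁, hns₁, hb₁⟩ := hwfun ℓ₁ h1'
      obtain ⟨hw2leaf, u₂, x₂, heq₂, hu₂, hx₂, hns₂, hb₂⟩ := hwfun ℓ₂ h2'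
      have hb₂' : TapAux.Btw G r u₂ (wfun ℓ₁ h1') := hfeq ▸ hb₂
      have hL1 : ℓ₁ ∈ L' := (Finset.mem_filter.mp h1').1
      have hL2 : ℓ₂ ∈ L' := (Finset.mem_filter.mp h2').1
      rcases TapAux.btw_total hT hb₁ hb₂' with h12 | h21
      · have hsm := hMin ℓ₁ hL1 ℓ₂ hL2 hne
        rw [heq₁, heq₂] at hsm
        exact TapAux.shadow_exists hT h12 hu₁ hx₁ hns₁ hu₂ hx₂ hns₂ hsm
      · have hsm := hMin ℓ₂ hL2 ℓ₁ hL1 (fun h => hne h.symm)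
        rw [heq₁, heq₂] at hsm
        exact TapAux.shadow_exists hT h21 hu₂ hx₂ hns₂ hu₁ hx₁ hns₁ hsm
  exact hle.trans (hWide c hc)
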